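/- Let K be a field, E an n-dimensional K-vector space with basis, R a quadratic K-algebra with n generators and d relations f_s = Σ c_{s,a,b} x_a x_b, and M the d-dimensional subspace of E⊗E spanned by the corresponding tensors Σ c_{s,a,b} e_a⊗e_b. Then for every q ≥ 2, dim R_q = dim E_q(M^⊥, E), where M^⊥ is the orthogonal complement with respect to the monomial-orthonormal form on E⊗E and E_q(L,E) = ∩_{j=1}^{q-1} E^{⊗(j-1)} ⊗ L ⊗ E^{⊗(q-1-j)}. -/

import Mathlib

open TensorProduct

namespace GS

variable (K : Type*) [Field K] (V : Type*) [AddCommGroup V] [Module K V]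

/-- The tensor product of two subspaces, as a subspace of the tensor product. -/
noncomputable def tsub {M N : Type*} [AddCommGroup M] [Module K M] [AddCommGroup N] [Module K N]
    (A : Submodule K M) (B : Submodule K N) : Submodule K (M ⊗[K] N) :=
  LinearMap.range (TensorProduct.map A.subtype B.subtype)

/-- `V ≃ V^{⊗1}`. -/
noncomputable def pow1 : V ≃ₗ[K] ⨂[K]^1 V :=
  (PiTensorProduct.subsingletonEquiv (s := fun _ => V) (0 : Fin 1)).symm

/-- `V ⊗ V ≃ V^{⊗2}`. -/
noncomputable def pow2 : (V ⊗[K] V) ≃ₗ[K] ⨂[K]^2 V :=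
  (TensorProduct.congr (pow1 K V) (pow1 K V)).trans
    ((TensorPower.mulEquiv (n := 1) (m := 1)).trans (TensorPower.cast K V (by norm_num)))

/-- The subspace `V^{⊗a} ⊗ L ⊗ V^{⊗b}` of `V^{⊗(a+(2+b))}`. -/
noncomputable def segAux (a b : ℕ) (L : Submodule K (V ⊗[K] V)) :
    Submodule K (⨂[K]^(a + (2 + b)) V) :=
  Submodule.map (TensorPower.mulEquiv (n := a) (m := 2 + b)).toLinearMap
    (tsub K (⊤ : Submodule K (⨂[K]^a V))
      (Submodule.map (TensorPower.mulEquiv (n := 2) (m := b)).toLinearMap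
        (tsub K (L.map (pow2 K V : (V ⊗[K] V) →ₗ[K] ⨂[K]^2 V)) (⊤ : Submodule K (⨂[K]^b V)))))

/-- For `j : Fin (q-1)`, the subspace `V^{⊗j} ⊗ L ⊗ V^{⊗(q-2-j)}` of `V^{⊗q}`
(the `(j+1)`-st shift of `L`). -/
noncomputable def shiftSub (q : ℕ) (L : Submodule K (V ⊗[K] V)) (j : Fin (q - 1)) :
    Submodule K (⨂[K]^q V) :=
  Submodule.map (TensorPower.cast K V (by have := j.2; omega : (j : ℕ) + (2 + (q - 2 - j)) = q)).toLinearMap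
    (segAux K V j (q - 2 - j) L)

/-- `E_q(L,V) = ⋂_{j=1}^{q-1} V^{⊗(j-1)} ⊗ L ⊗ V^{⊗(q-1-j)} ⊆ V^{⊗q}`. -/
noncomputable def Eint (q : ℕ) (L : Submodule K (V ⊗[K] V)) : Submodule K (⨂[K]^q V) :=
  ⨅ j : Fin (q - 1), shiftSub K V q L j

/-- The degree-`q` component of the two-sided ideal generated by the subspace
`M ⊆ V ⊗ V` of quadratic relations: the sum of all shifts `V^{⊗(j-1)} ⊗ M ⊗ V^{⊗(q-1-j)}`. -/
noncomputable def idealComp (q : ℕ) (M : Submodule K (V ⊗[K] V)) : Submodule K (⨂[K]^q V) :=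
  ⨆ j : Fin (q - 1), shiftSub K V q M j

/-- The dimension of the degree-`q` component of the quadratic algebra with space of
relations `M ⊆ V ⊗ V` (the quotient of `V^{⊗q}` by the degree-`q` component of the ideal). -/
noncomputable def quadDim (q : ℕ) (M : Submodule K (V ⊗[K] V)) : ℕ :=
  Module.finrank K ((⨂[K]^q V) ⧸ idealComp K V q M)

/-- `h_q(K,n,d)`: the minimal dimension of the `q`-th graded component over all quadratic
`K`-algebras with `n` generators and `d` (linearly independent) quadratic relations. -/
noncomputable def hq (n d q : ℕ) : ℕ :=
  sInf { h | ∃ M : Submodule K ((Fin n → K) ⊗[K] (Fin n → K)),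
      Module.finrank K M = d ∧ quadDim K (Fin n → K) q M = h }

end GS

namespace GS

variable (K : Type*) [Field K]

/-- The coordinate functional on `E ⊗ E` (with `E = K^n`) sending `e_a ⊗ e_b` to `1`
and all other basis tensors to `0`. -/
noncomputable def coord2 (n : ℕ) (a b : Fin n) : ((Fin n → K) ⊗[K] (Fin n → K)) →ₗ[K] K :=
  TensorProduct.lift ((LinearMap.proj a : (Fin n → K) →ₗ[K] K).smulRight
    (LinearMap.proj b : (Fin n → K) →ₗ[K] K))

/-- The symmetric bilinear form on `E ⊗ E` making the basis tensors `e_a ⊗ e_b`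
orthonormal, curried in its first argument. -/
noncomputable def form2 (n : ℕ) (x : (Fin n → K) ⊗[K] (Fin n → K)) :
    ((Fin n → K) ⊗[K] (Fin n → K)) →ₗ[K] K :=
  ∑ p : Fin n × Fin n, coord2 K n p.1 p.2 x • coord2 K n p.1 p.2

/-- Orthogonal complement in `E ⊗ E` with respect to the monomial-orthonormal form. -/
noncomputable def perp2 (n : ℕ) (M : Submodule K ((Fin n → K) ⊗[K] (Fin n → K))) :
    Submodule K ((Fin n → K) ⊗[K] (Fin n → K)) :=
  ⨅ η ∈ M, LinearMap.ker (form2 K n η)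

end GS



namespace GSAux

open Module

section Perp

variable {K : Type*} [Field K]

noncomputable def perpP {W : Type*} [AddCommGroup W] [Module K W]
    (Φ : W ≃ₗ[K] Module.Dual K W) (S : Submodule K W) : Submodule K W :=
  S.dualAnnihilator.comap (Φ : W →ₗ[K] Module.Dual K W)

lemma mem_perpP {W : Type*} [AddCommGroup W] [Module K W]
    (Φ : W ≃ₗ[K] Module.Dual K W) (S : Submodule K W) (x : W) :
    x ∈ perpP Φ S ↔ ∀ s ∈ S, Φ x s = 0 := by
  simp [perpP, Submodule.mem_dualAnnihilator]

lemma perpP_iSup {W : Type*} [AddCommGroup W] [Module K W] {ι : Sort*}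
    (Φ : W ≃ₗ[K] Module.Dual K W) (S : ι → Submodule K W) :
    perpP Φ (⨆ i, S i) = ⨅ i, perpP Φ (S i) := by
  simp [perpP, Submodule.dualAnnihilator_iSup_eq, Submodule.comap_iInf]

lemma submap_coe {W W' : Type*} [AddCommGroup W] [Module K W] [AddCommGroup W'] [Module K W']
    (e : W ≃ₗ[K] W') (S : Submodule K W) :
    Submodule.map e.toLinearMap S = Submodule.map (e : W →ₗ[K] W') S := rfl

lemma finrank_perpP {W : Type*} [AddCommGroup W] [Module K W] [FiniteDimensional K W]
    (Φ : W ≃ₗ[K] Module.Dual K W) (S : Submodule K W) :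
    finrank K (perpP Φ S) + finrank K S = finrank K W := by
  have h1 : perpP Φ S = S.dualAnnihilator.map Φ.symm.toLinearMap := Submodule.comap_equiv_eq_map_symm _ _
  rw [h1, submap_coe, LinearEquiv.finrank_map_eq,
    ← LinearEquiv.finrank_eq (Subspace.quotEquivAnnihilator S),
    Submodule.finrank_quotient_add_finrank]

lemma perpP_map {W W' : Type*} [AddCommGroup W] [Module K W] [AddCommGroup W'] [Module K W']
    (Φ : W ≃ₗ[K] Module.Dual K W) (Φ' : W' ≃ₗ[K] Module.Dual K W') (e : W ≃ₗ[K] W')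
    (h : ∀ x y, Φ' (e x) (e y) = Φ x y) (S : Submodule K W) :
    perpP Φ' (S.map e.toLinearMap) = (perpP Φ S).map e.toLinearMap := by
  ext y
  rw [submap_coe, submap_coe, Submodule.mem_map_equiv, mem_perpP, mem_perpP]
  constructor
  · intro H s hs
    have h1 := H (e s) (Submodule.mem_map_of_mem hs)
    calc Φ (e.symm y) s = Φ' (e (e.symm y)) (e s) := (h _ _).symm
    _ = Φ' y (e s) := by rw [e.apply_symm_apply]
    _ = 0 := h1
  · intro H s' hs'
    obtain ⟨s, hs, rfl⟩ := hs'
    calc Φ' y (e s) = Φ' (e (e.symm y)) (e s) := by rw [e.apply_symm_apply]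
    _ = Φ (e.symm y) s := h _ _
    _ = 0 := H s hs

end Perp

section Tsub

variable {K : Type*} [Field K] {X Y : Type*} [AddCommGroup X] [Module K X]
  [AddCommGroup Y] [Module K Y]

lemma finrank_tsub [FiniteDimensional K X] [FiniteDimensional K Y]
    (A : Submodule K X) (B : Submodule K Y) :
    finrank K (GS.tsub K A B) = finrank K A * finrank K B := by
  have heq : TensorProduct.map A.subtype B.subtype
      = (LinearMap.lTensor X B.subtype).comp (LinearMap.rTensor (↥B) A.subtype) :=
    (LinearMap.lTensor_comp_rTensor ..).symm
  have hinj : Function.Injective (TensorProduct.map A.subtype B.subtype) := by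
    rw [heq]
    exact (Module.Flat.lTensor_preserves_injective_linearMap _ B.injective_subtype).comp
      (Module.Flat.rTensor_preserves_injective_linearMap _ A.injective_subtype)
  rw [GS.tsub, LinearMap.finrank_range_of_inj hinj, Module.finrank_tensorProduct]

noncomputable def tensorPair [Module.Finite K X] [Module.Free K X]
    [Module.Finite K Y] [Module.Free K Y]
    (ΦX : X ≃ₗ[K] Dual K X) (ΦY : Y ≃ₗ[K] Dual K Y) :
    (X ⊗[K] Y) ≃ₗ[K] Dual K (X ⊗[K] Y) :=
  (TensorProduct.congr ΦX ΦY).trans (TensorProduct.dualDistribEquiv K X Y)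

lemma tensorPair_tmul [Module.Finite K X] [Module.Free K X]
    [Module.Finite K Y] [Module.Free K Y]
    (ΦX : X ≃ₗ[K] Dual K X) (ΦY : Y ≃ₗ[K] Dual K Y) (u s : X) (v t : Y) :
    tensorPair ΦX ΦY (u ⊗ₜ v) (s ⊗ₜ t) = ΦX u s * ΦY v t := by
  simp [tensorPair, TensorProduct.dualDistribEquiv, TensorProduct.dualDistribEquivOfBasis,
    TensorProduct.dualDistrib_apply]

variable [FiniteDimensional K X] [FiniteDimensional K Y]

lemma perpP_tsub_top (ΦX : X ≃ₗ[K] Dual K X) (ΦY : Y ≃ₗ[K] Dual K Y) (S : Submodule K X) :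
    perpP (tensorPair ΦX ΦY) (GS.tsub K S (⊤ : Submodule K Y))
      = GS.tsub K (perpP ΦX S) (⊤ : Submodule K Y) := by
  have hle : GS.tsub K (perpP ΦX S) (⊤ : Submodule K Y)
      ≤ perpP (tensorPair ΦX ΦY) (GS.tsub K S (⊤ : Submodule K Y)) := by
    rintro x ⟨z, rfl⟩
    rw [mem_perpP]
    rintro w ⟨c, rfl⟩
    induction z with
    | zero => simp
    | add u v hu hv => simp only [map_add, LinearMap.add_apply, hu, hv, add_zero]
    | tmul p q =>
      induction c with
      | zero => simp
      | add u v hu hv => simp only [map_add, map_add, hu, hv, add_zero]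
      | tmul s t =>
        simp only [TensorProduct.map_tmul, tensorPair_tmul, Submodule.coe_subtype]
        have h0 : ΦX (p : X) (s : X) = 0 := (mem_perpP ΦX S (p : X)).mp p.2 (s : X) s.2
        rw [h0, zero_mul]
  refine (Submodule.eq_of_le_of_finrank_le hle ?_).symm
  have h1 := finrank_perpP (tensorPair ΦX ΦY) (GS.tsub K S (⊤ : Submodule K Y))
  have h2 := finrank_perpP ΦX S
  rw [finrank_tsub, finrank_top, Module.finrank_tensorProduct] at h1
  rw [finrank_tsub, finrank_top]
  nlinarith [h1, h2]

lemma perpP_top_tsub (ΦX : X ≃ₗ[K] Dual K X) (ΦY : Y ≃ₗ[K] Dual K Y) (S : Submodule K Y) :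
    perpP (tensorPair ΦX ΦY) (GS.tsub K (⊤ : Submodule K X) S)
      = GS.tsub K (⊤ : Submodule K X) (perpP ΦY S) := by
  have hle : GS.tsub K (⊤ : Submodule K X) (perpP ΦY S)
      ≤ perpP (tensorPair ΦX ΦY) (GS.tsub K (⊤ : Submodule K X) S) := by
    rintro x ⟨z, rfl⟩
    rw [mem_perpP]
    rintro w ⟨c, rfl⟩
    induction z with
    | zero => simp
    | add u v hu hv => simp only [map_add, LinearMap.add_apply, hu, hv, add_zero]
    | tmul p q =>
      induction c with
      | zero => simp
      | add u v hu hv => simp only [map_add, map_add, hu, hv, add_zero]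
      | tmul s t =>
        simp only [TensorProduct.map_tmul, tensorPair_tmul, Submodule.coe_subtype]
        have h0 : ΦY (q : Y) (t : Y) = 0 := (mem_perpP ΦY S (q : Y)).mp q.2 (t : Y) t.2
        rw [h0, mul_zero]
  refine (Submodule.eq_of_le_of_finrank_le hle ?_).symm
  have h1 := finrank_perpP (tensorPair ΦX ΦY) (GS.tsub K (⊤ : Submodule K X) S)
  have h2 := finrank_perpP ΦY S
  rw [finrank_tsub, finrank_top, Module.finrank_tensorProduct] at h1
  rw [finrank_tsub, finrank_top]
  nlinarith [h1, h2]

end Tsub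

section Pow

set_option linter.unusedSectionVars false

variable {K : Type*} [Field K] {V : Type*} [AddCommGroup V] [Module K V]

noncomputable def transportPair {X Y : Type*} [AddCommGroup X] [Module K X]
    [AddCommGroup Y] [Module K Y] (e : X ≃ₗ[K] Y) (Φ : X ≃ₗ[K] Dual K X) :
    Y ≃ₗ[K] Dual K Y := e.symm.trans (Φ.trans e.symm.dualMap)

lemma transportPair_apply {X Y : Type*} [AddCommGroup X] [Module K X]
    [AddCommGroup Y] [Module K Y] (e : X ≃ₗ[K] Y) (Φ : X ≃ₗ[K] Dual K X) (y y' : Y) :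
    transportPair e Φ y y' = Φ (e.symm y) (e.symm y') := rfl

lemma transportPair_apply_apply {X Y : Type*} [AddCommGroup X] [Module K X]
    [AddCommGroup Y] [Module K Y] (e : X ≃ₗ[K] Y) (Φ : X ≃ₗ[K] Dual K X) (x x' : X) :
    transportPair e Φ (e x) (e x') = Φ x x' := by
  rw [transportPair_apply, e.symm_apply_apply, e.symm_apply_apply]

noncomputable def pairK : K ≃ₗ[K] Module.Dual K K :=
  LinearEquiv.ofLinear (LinearMap.toSpanSingleton K _ (LinearMap.id))
    (LinearMap.applyₗ (1 : K))
    (by ext φ; simp [LinearMap.toSpanSingleton_apply])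
    (by ext; simp [LinearMap.toSpanSingleton_apply])

lemma pairK_apply (r r' : K) : pairK r r' = r * r' := by
  simp [pairK, LinearMap.toSpanSingleton_apply]

variable [FiniteDimensional K V]

noncomputable def tpFDaux : ∀ q : ℕ, FiniteDimensional K (⨂[K]^q V)
  | 0 => (PiTensorProduct.isEmptyEquiv (Fin 0)).symm.finiteDimensional
  | (q+1) => by
      haveI := tpFDaux q
      haveI : FiniteDimensional K (⨂[K]^1 V) := (GS.pow1 K V).finiteDimensional
      exact (TensorPower.mulEquiv (n := q) (m := 1) (R := K) (M := V)).finiteDimensional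

instance tpFD (q : ℕ) : FiniteDimensional K (⨂[K]^q V) := tpFDaux q

variable (ΦV : V ≃ₗ[K] Module.Dual K V)

noncomputable def pairOne : (⨂[K]^1 V) ≃ₗ[K] Dual K (⨂[K]^1 V) :=
  transportPair (GS.pow1 K V) ΦV

noncomputable def pairPow : ∀ q : ℕ, (⨂[K]^q V) ≃ₗ[K] Module.Dual K (⨂[K]^q V)
  | 0 => transportPair (PiTensorProduct.isEmptyEquiv (Fin 0)).symm pairK
  | (q+1) => transportPair (TensorPower.mulEquiv (n := q) (m := 1))
      (tensorPair (pairPow q) (pairOne ΦV))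

lemma pairPow_succ (q : ℕ) : pairPow ΦV (q+1)
    = transportPair (TensorPower.mulEquiv (n := q) (m := 1))
      (tensorPair (pairPow ΦV q) (pairOne ΦV)) := rfl

lemma pairPow_cast {i j : ℕ} (h : i = j) (x y : ⨂[K]^i V) :
    pairPow ΦV j (TensorPower.cast K V h x) (TensorPower.cast K V h y) = pairPow ΦV i x y := by
  subst h
  rw [TensorPower.cast_refl]
  rfl

lemma mul_tprod_elim0 (n : ℕ) (x : ⨂[K]^n V) :
    TensorPower.mulEquiv (x ⊗ₜ[K] (PiTensorProduct.tprod K Fin.elim0 : ⨂[K]^0 V)) = x := by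
  have h := TensorPower.mul_one (R := K) (M := V) x
  rw [show TensorPower.cast K V (add_zero n) = LinearEquiv.refl K _ from
    TensorPower.cast_refl K V (add_zero n)] at h
  exact h

lemma tprod_elim0_mul (x : ⨂[K]^1 V) :
    TensorPower.mulEquiv ((PiTensorProduct.tprod K Fin.elim0 : ⨂[K]^0 V) ⊗ₜ x) = x := by
  have h := TensorPower.one_mul (R := K) (M := V) x
  rw [show TensorPower.cast K V (zero_add 1) = LinearEquiv.refl K _ from
    TensorPower.cast_refl K V (zero_add 1)] at h
  exact h

lemma mulEquiv_assoc1 (n m : ℕ) (A : ⨂[K]^n V) (z : ⨂[K]^m V) (w : ⨂[K]^1 V) :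
    TensorPower.mulEquiv (A ⊗ₜ TensorPower.mulEquiv (z ⊗ₜ w))
      = TensorPower.mulEquiv (TensorPower.mulEquiv (A ⊗ₜ z) ⊗ₜ w) := by
  have h := TensorPower.mul_assoc (R := K) (M := V) A z w
  rw [show TensorPower.cast K V (add_assoc n m 1) = LinearEquiv.refl K _ from
    TensorPower.cast_refl K V (add_assoc n m 1)] at h
  exact h.symm

lemma tp_zero_eq (B : ⨂[K]^0 V) :
    B = (PiTensorProduct.isEmptyEquiv (Fin 0) B) • PiTensorProduct.tprod K Fin.elim0 := by
  apply (PiTensorProduct.isEmptyEquiv (Fin 0)).injective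
  rw [map_smul, PiTensorProduct.isEmptyEquiv_apply_tprod, smul_eq_mul, mul_one]

lemma mul_zero_pow (n : ℕ) (A : ⨂[K]^n V) (B : ⨂[K]^0 V) :
    TensorPower.mulEquiv (A ⊗ₜ B) = (PiTensorProduct.isEmptyEquiv (Fin 0) B) • A := by
  conv_lhs => rw [tp_zero_eq B]
  rw [tmul_smul, map_smul, mul_tprod_elim0]

lemma pairPow_zero_apply (B B' : ⨂[K]^0 V) :
    pairPow ΦV 0 B B'
      = PiTensorProduct.isEmptyEquiv (Fin 0) B * PiTensorProduct.isEmptyEquiv (Fin 0) B' := by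
  rw [show pairPow ΦV 0
      = transportPair (PiTensorProduct.isEmptyEquiv (Fin 0)).symm pairK from rfl,
    transportPair_apply]
  simp [pairK_apply]

lemma pairPow_succ_apply (k : ℕ) (a a' : ⨂[K]^k V) (w w' : ⨂[K]^1 V) :
    pairPow ΦV (k+1) (TensorPower.mulEquiv (a ⊗ₜ w)) (TensorPower.mulEquiv (a' ⊗ₜ w'))
      = pairPow ΦV k a a' * pairOne ΦV w w' := by
  rw [pairPow_succ, transportPair_apply_apply, tensorPair_tmul]

lemma pairOne_apply (u u' : V) :
    pairOne ΦV (GS.pow1 K V u) (GS.pow1 K V u') = ΦV u u' :=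
  transportPair_apply_apply _ _ _ _

lemma pairPow_one (u u' : V) :
    pairPow ΦV 1 (GS.pow1 K V u) (GS.pow1 K V u') = ΦV u u' := by
  rw [show GS.pow1 K V u = TensorPower.mulEquiv
      ((PiTensorProduct.tprod K Fin.elim0 : ⨂[K]^0 V) ⊗ₜ GS.pow1 K V u) from
    (tprod_elim0_mul _).symm]
  rw [show GS.pow1 K V u' = TensorPower.mulEquiv
      ((PiTensorProduct.tprod K Fin.elim0 : ⨂[K]^0 V) ⊗ₜ GS.pow1 K V u') from
    (tprod_elim0_mul _).symm]
  refine (pairPow_succ_apply ΦV 0 _ _ _ _).trans ?_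
  rw [pairPow_zero_apply, PiTensorProduct.isEmptyEquiv_apply_tprod, pairOne_apply, one_mul,
    one_mul]

lemma pairPow_mul (n m : ℕ) : ∀ (x y : (⨂[K]^n V) ⊗[K] (⨂[K]^m V)),
    pairPow ΦV (n + m) (TensorPower.mulEquiv x) (TensorPower.mulEquiv y)
      = tensorPair (pairPow ΦV n) (pairPow ΦV m) x y := by
  induction m with
  | zero =>
    intro x y
    induction x with
    | zero => simp
    | add a b ha hb => simp only [map_add, LinearMap.add_apply, ha, hb]
    | tmul A B =>
      induction y with
      | zero => simp
      | add a b ha hb => simp only [map_add, ha, hb]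
      | tmul A' B' =>
        rw [mul_zero_pow, mul_zero_pow, tensorPair_tmul, pairPow_zero_apply]
        have hAA : pairPow ΦV (n+0) A A' = pairPow ΦV n A A' := rfl
        simp only [map_smul, LinearMap.smul_apply, smul_eq_mul]
        rw [hAA]
        ring
  | succ m ih =>
    intro x y
    induction x with
    | zero => simp
    | add a b ha hb => simp only [map_add, LinearMap.add_apply, ha, hb]
    | tmul A B =>
      induction y with
      | zero => simp
      | add a b ha hb => simp only [map_add, ha, hb]
      | tmul A' B' =>
        obtain ⟨c, rfl⟩ := (TensorPower.mulEquiv (n := m) (m := 1) (R := K) (M := V)).surjective B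
        obtain ⟨c', rfl⟩ :=
          (TensorPower.mulEquiv (n := m) (m := 1) (R := K) (M := V)).surjective B'
        induction c with
        | zero => simp
        | add u v hu hv => simp only [map_add, tmul_add, LinearMap.add_apply, hu, hv]
        | tmul z w =>
          induction c' with
          | zero => simp
          | add u v hu hv => simp only [map_add, tmul_add, hu, hv]
          | tmul z' w' =>
            rw [mulEquiv_assoc1, mulEquiv_assoc1, tensorPair_tmul]
            refine (pairPow_succ_apply ΦV (n+m) _ _ _ _).trans ?_
            rw [ih (A ⊗ₜ z) (A' ⊗ₜ z'), tensorPair_tmul, pairPow_succ_apply]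
            ring

lemma pow2_tmul (u v : V) :
    GS.pow2 K V (u ⊗ₜ v) = TensorPower.mulEquiv (GS.pow1 K V u ⊗ₜ GS.pow1 K V v) := by
  rw [GS.pow2]
  simp only [LinearEquiv.trans_apply, TensorProduct.congr_tmul]
  rw [show TensorPower.cast K V (by norm_num : 1+1 = 2) = LinearEquiv.refl K _ from
    TensorPower.cast_refl K V _]
  rfl

lemma pairPow_two (z z' : V ⊗[K] V) :
    pairPow ΦV 2 (GS.pow2 K V z) (GS.pow2 K V z') = tensorPair ΦV ΦV z z' := by
  induction z with
  | zero => simp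
  | add a b ha hb => simp only [map_add, LinearMap.add_apply, ha, hb]
  | tmul u v =>
    induction z' with
    | zero => simp
    | add a b ha hb => simp only [map_add, ha, hb]
    | tmul u' v' =>
      rw [pow2_tmul, pow2_tmul, tensorPair_tmul]
      refine (pairPow_succ_apply ΦV 1 _ _ _ _).trans ?_
      rw [pairPow_one, pairOne_apply]

end Pow

section Coord

variable {K : Type*} [Field K] {n : ℕ}

noncomputable def pairE (K : Type*) [Field K] (n : ℕ) :
    (Fin n → K) ≃ₗ[K] Dual K (Fin n → K) := (Pi.basisFun K (Fin n)).toDualEquiv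

lemma pairE_apply (u s : Fin n → K) : pairE K n u s = ∑ i, s i * u i := by
  have hs : s = ∑ i, s i • (Pi.basisFun K (Fin n)) i := by
    have := (Pi.basisFun K (Fin n)).sum_repr s
    simpa [Pi.basisFun_repr] using this.symm
  conv_lhs => rw [hs]
  rw [map_sum]
  refine Finset.sum_congr rfl fun i _ => ?_
  rw [map_smul, smul_eq_mul]
  congr 1
  rw [pairE, Basis.toDualEquiv_apply, Basis.toDual_eq_repr, Pi.basisFun_repr]

lemma coord2_tmul (a b : Fin n) (u v : Fin n → K) :
    GS.coord2 K n a b (u ⊗ₜ v) = u a * v b := by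
  simp [GS.coord2, smul_eq_mul]

lemma form2_zero (x : (Fin n → K) ⊗[K] (Fin n → K)) : GS.form2 K n 0 x = 0 := by
  simp [GS.form2]

lemma form2_add (a b x : (Fin n → K) ⊗[K] (Fin n → K)) :
    GS.form2 K n (a + b) x = GS.form2 K n a x + GS.form2 K n b x := by
  simp [GS.form2, map_add, add_smul, Finset.sum_add_distrib]

lemma form2_eq (η x : (Fin n → K) ⊗[K] (Fin n → K)) :
    GS.form2 K n η x = tensorPair (pairE K n) (pairE K n) x η := by
  induction η with
  | zero => simp [form2_zero]
  | add a b ha hb => rw [form2_add, ha, hb, map_add]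
  | tmul s t =>
    induction x with
    | zero =>
      rw [map_zero, show (tensorPair (pairE K n) (pairE K n)) 0 = 0 from
        (tensorPair (pairE K n) (pairE K n)).map_zero, LinearMap.zero_apply]
    | add a b ha hb =>
      rw [map_add, map_add, LinearMap.add_apply, ha, hb]
    | tmul u v =>
      rw [tensorPair_tmul, pairE_apply, pairE_apply]
      rw [GS.form2, LinearMap.sum_apply]
      rw [Finset.sum_mul_sum, Fintype.sum_prod_type]
      refine Finset.sum_congr rfl fun a _ => Finset.sum_congr rfl fun b _ => ?_
      rw [LinearMap.smul_apply, coord2_tmul, coord2_tmul, smul_eq_mul]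
      ring

lemma perp2_eq (M : Submodule K ((Fin n → K) ⊗[K] (Fin n → K))) :
    GS.perp2 K n M = perpP (tensorPair (pairE K n) (pairE K n)) M := by
  ext x
  rw [mem_perpP, GS.perp2]
  simp only [Submodule.mem_iInf, LinearMap.mem_ker]
  constructor
  · intro H s hs
    rw [← form2_eq]; exact H s hs
  · intro H s hs
    rw [form2_eq]; exact H s hs

end Coord

section Main

variable {K : Type*} [Field K]

set_option synthInstance.maxHeartbeats 400000 in
set_option maxHeartbeats 1600000 in
lemma perpP_shiftSub (n q : ℕ) (M : Submodule K ((Fin n → K) ⊗[K] (Fin n → K)))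
    (j : Fin (q - 1)) :
    perpP (pairPow (pairE K n) q) (GS.shiftSub K (Fin n → K) q M j)
      = GS.shiftSub K (Fin n → K) q (perpP (tensorPair (pairE K n) (pairE K n)) M) j := by
  rw [GS.shiftSub, GS.shiftSub, GS.segAux, GS.segAux]
  rw [perpP_map (pairPow (pairE K n) ((j : ℕ) + (2 + (q - 2 - (j : ℕ))))) _ _
    (fun x y => pairPow_cast (pairE K n) _ x y) _]
  congr 1
  rw [perpP_map (tensorPair (pairPow (pairE K n) (j : ℕ))
      (pairPow (pairE K n) (2 + (q - 2 - (j : ℕ))))) _ _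
    (fun x y => pairPow_mul (pairE K n) (j : ℕ) (2 + (q - 2 - (j : ℕ))) x y) _]
  rw [perpP_top_tsub]
  congr 2
  rw [perpP_map (tensorPair (pairPow (pairE K n) 2) (pairPow (pairE K n) (q - 2 - (j : ℕ)))) _ _
    (fun x y => pairPow_mul (pairE K n) 2 (q - 2 - (j : ℕ)) x y) _]
  rw [perpP_tsub_top]
  congr 2
  rw [perpP_map (tensorPair (pairE K n) (pairE K n)) _ (GS.pow2 K (Fin n → K))
    (fun x y => pairPow_two (pairE K n) x y) _]

end Main

end GSAux

/-- Let `R` be the quadratic `K`-algebra with `n` generators whose space of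
relations is the `d`-dimensional subspace `M ⊆ E ⊗ E` (`E = K^n`). Then for every `q ≥ 2`,
`dim R_q = dim E_q(M^⊥, E)`. -/
theorem quadDim_eq_finrank_Eint_perp (K : Type*) [Field K] (n d : ℕ)
    (M : Submodule K ((Fin n → K) ⊗[K] (Fin n → K))) (hM : Module.finrank K M = d)
    (q : ℕ) (hq2 : 2 ≤ q) :
    GS.quadDim K (Fin n → K) q M =
      Module.finrank K (GS.Eint K (Fin n → K) q (GS.perp2 K n M)) := by
  classical
  have key : ∀ j : Fin (q - 1),
      GSAux.perpP (GSAux.pairPow (GSAux.pairE K n) q) (GS.shiftSub K (Fin n → K) q M j)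
        = GS.shiftSub K (Fin n → K) q (GS.perp2 K n M) j := by
    intro j
    rw [GSAux.perpP_shiftSub, GSAux.perp2_eq]
  have h1 : GS.Eint K (Fin n → K) q (GS.perp2 K n M)
      = GSAux.perpP (GSAux.pairPow (GSAux.pairE K n) q) (GS.idealComp K (Fin n → K) q M) := by
    rw [GS.idealComp, GSAux.perpP_iSup, GS.Eint]
    exact (iInf_congr key).symm
  rw [GS.quadDim, h1]
  have h2 : GSAux.perpP (GSAux.pairPow (GSAux.pairE K n) q) (GS.idealComp K (Fin n → K) q M)
      = (GS.idealComp K (Fin n → K) q M).dualAnnihilator.map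
          (GSAux.pairPow (GSAux.pairE K n) q).symm.toLinearMap :=
    Submodule.comap_equiv_eq_map_symm _ _
  rw [h2, GSAux.submap_coe, LinearEquiv.finrank_map_eq]
  exact LinearEquiv.finrank_eq
    (Subspace.quotEquivAnnihilator (GS.idealComp K (Fin n → K) q M))
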